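/- Let ζ_{j,k} satisfy 0 < ζ_{1,k} ≤ ⋯ ≤ ζ_{k,k} = 1 and ζ_{1,j} ≥ ζ_{1,k} for j ≤ k. Suppose nonnegative reals (e_k) satisfy e_1 ≤ C(Δt)² and e_k ≤ Σ_{j=1}^{k-1}(ζ_{j+1,k} - ζ_{j,k}) e_j + C(Δt)² for k ≥ 2, where C ≥ 0. Then e_k ≤ (C/ζ_{1,k})(Δt)² for all k. -/

import Mathlib

lemma ico_telescope (f : ℕ → ℝ) : ∀ k, 1 ≤ k →
    ∑ j ∈ Finset.Ico 1 k, (f (j + 1) - f j) = f k - f 1 := by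
  intro k hk
  induction k with
  | zero => omega
  | succ n ihn =>
    rcases Nat.lt_or_ge 1 (n+1) with h | h
    · have hn : 1 ≤ n := by omega
      rw [Finset.sum_Ico_succ_top hn, ihn hn]; ring
    · have : n = 0 := by omega
      subst this; simp


theorem discrete_error_bound (ζ : ℕ → ℕ → ℝ) (Δt C : ℝ) (hΔt : 0 < Δt) (hC : 0 ≤ C)
    (hζpos : ∀ j k : ℕ, 1 ≤ j → j ≤ k → 0 < ζ j k ∧ ζ j k ≤ 1)
    (hζmono : ∀ j k : ℕ, 1 ≤ j → j < k → ζ j k ≤ ζ (j + 1) k)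
    (hζkk : ∀ k : ℕ, 1 ≤ k → ζ k k = 1)
    (hζ1 : ∀ j k : ℕ, 1 ≤ j → j ≤ k → ζ 1 k ≤ ζ 1 j)
    (e : ℕ → ℝ) (he : ∀ k, 0 ≤ e k)
    (he1 : e 1 ≤ C * Δt ^ 2)
    (hek : ∀ k : ℕ, 2 ≤ k →
      e k ≤ (∑ j ∈ Finset.Ico 1 k, (ζ (j + 1) k - ζ j k) * e j) + C * Δt ^ 2) :
    ∀ k : ℕ, 1 ≤ k → e k ≤ C / ζ 1 k * Δt ^ 2 := by
  intro k
  induction k using Nat.strong_induction_on with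
  | _ k ih =>
    intro hk
    rcases eq_or_lt_of_le hk with h1 | h2
    · -- k = 1
      rw [← h1, hζkk 1 le_rfl]
      simpa using he1
    · -- k ≥ 2
      have hk2 : 2 ≤ k := h2
      have hζ1k : 0 < ζ 1 k := (hζpos 1 k le_rfl hk).1
      have key : ∀ j ∈ Finset.Ico 1 k,
          (ζ (j + 1) k - ζ j k) * e j ≤ (ζ (j + 1) k - ζ j k) * (C / ζ 1 k * Δt ^ 2) := by
        intro j hj
        rw [Finset.mem_Ico] at hj
        have hj1 : 1 ≤ j := hj.1
        have hjk : j < k := hj.2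
        have hdn : 0 ≤ ζ (j + 1) k - ζ j k := sub_nonneg.2 (hζmono j k hj1 hjk)
        have hζ1j : 0 < ζ 1 j := (hζpos 1 j le_rfl hj1).1
        have hej : e j ≤ C / ζ 1 j * Δt ^ 2 := ih j hjk hj1
        have hle : C / ζ 1 j ≤ C / ζ 1 k :=
          div_le_div_of_nonneg_left hC hζ1k (hζ1 j k hj1 hjk.le) |>.trans_eq rfl
        refine mul_le_mul_of_nonneg_left (hej.trans ?_) hdn
        exact mul_le_mul_of_nonneg_right hle (sq_nonneg Δt)
      have hsum : (∑ j ∈ Finset.Ico 1 k, (ζ (j + 1) k - ζ j k) * e j)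
          ≤ (1 - ζ 1 k) * (C / ζ 1 k * Δt ^ 2) := by
        calc (∑ j ∈ Finset.Ico 1 k, (ζ (j + 1) k - ζ j k) * e j)
            ≤ ∑ j ∈ Finset.Ico 1 k, (ζ (j + 1) k - ζ j k) * (C / ζ 1 k * Δt ^ 2) :=
              Finset.sum_le_sum key
          _ = (∑ j ∈ Finset.Ico 1 k, (ζ (j + 1) k - ζ j k)) * (C / ζ 1 k * Δt ^ 2) := by
              rw [Finset.sum_mul]
          _ = (ζ k k - ζ 1 k) * (C / ζ 1 k * Δt ^ 2) := by
              rw [ico_telescope (fun j => ζ j k) k hk]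
          _ = (1 - ζ 1 k) * (C / ζ 1 k * Δt ^ 2) := by rw [hζkk k hk]
      have := (hek k hk2).trans (add_le_add hsum le_rfl)
      have hne : ζ 1 k ≠ 0 := ne_of_gt hζ1k
      calc e k ≤ (1 - ζ 1 k) * (C / ζ 1 k * Δt ^ 2) + C * Δt ^ 2 := this
        _ = C / ζ 1 k * Δt ^ 2 := by field_simp; ring
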